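/- Let p be a prime and k a field of characteristic different from p. Let P be a finite p-group and V a finite-dimensional k-vector space carrying an irreducible (simple) representation ρ of P such that the commutator subgroup ⁅P,P⁆ does not act trivially on V. Let x₁, …, x_s be elements generating P, each of order exactly p. Then there exists an index i such that p · dim_k C_V(x_i) = dim_k V, where C_V(x) = {v ∈ V : ρ(x)v = v} is the fixed-point subspace of x. -/

import Mathlib

open Finset

/-- Group-theoretic auxiliary lemma: in a nonabelian finite `p`-group generated by `S`,
there is `a ∈ S` and `b` such that `a⁻¹ * b * a * b⁻¹` is a nontrivial central element. -/
private lemma aux_grp {p : ℕ} (hp : p.Prime) {G : Type*} [Group G] [Finite G]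
    (hG : IsPGroup p G) (S : Set G) (hS : Subgroup.closure S = ⊤)
    (hna : ¬ ∀ a b : G, a * b = b * a) :
    ∃ a ∈ S, ∃ b : G,
      (a⁻¹ * b * a * b⁻¹ ∈ Subgroup.center G) ∧ a⁻¹ * b * a * b⁻¹ ≠ 1 := by
  haveI : Fact p.Prime := ⟨hp⟩
  obtain ⟨g₀, hg₀⟩ : ∃ g : G, g ∉ Subgroup.center G := by
    by_contra h
    push_neg at h
    exact hna fun a b => Subgroup.mem_center_iff.mp (h b) a
  haveI : Nontrivial (G ⧸ Subgroup.center G) := by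
    refine ⟨⟨QuotientGroup.mk g₀, 1, fun h => ?_⟩⟩
    exact hg₀ ((QuotientGroup.eq_one_iff g₀).mp h)
  have hQ : IsPGroup p (G ⧸ Subgroup.center G) := hG.to_quotient (Subgroup.center G)
  haveI : Nontrivial (Subgroup.center (G ⧸ Subgroup.center G)) := hQ.center_nontrivial
  obtain ⟨c, hc⟩ := exists_ne (1 : Subgroup.center (G ⧸ Subgroup.center G))
  obtain ⟨b, hb⟩ := QuotientGroup.mk'_surjective (Subgroup.center G) (c : G ⧸ Subgroup.center G)
  have hbne : b ∉ Subgroup.center G := by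
    intro h
    apply hc
    apply Subtype.ext
    have : QuotientGroup.mk' (Subgroup.center G) b = 1 := (QuotientGroup.eq_one_iff b).mpr h
    rw [← hb, this]
    rfl
  have hex : ∃ a ∈ S, a * b ≠ b * a := by
    by_contra h
    push_neg at h
    apply hbne
    have hle : Subgroup.closure S ≤ Subgroup.centralizer {b} := by
      refine (Subgroup.closure_le _).mpr fun a ha => ?_
      refine Subgroup.mem_centralizer_iff.mpr fun h' hh' => ?_
      rcases hh' with rfl
      exact (h a ha).symm
    rw [hS] at hle
    refine Subgroup.mem_center_iff.mpr fun g => ?_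
    have hg : g ∈ Subgroup.centralizer {b} := hle (Subgroup.mem_top g)
    exact (Subgroup.mem_centralizer_iff.mp hg b rfl).symm
  obtain ⟨a, haS, hab⟩ := hex
  refine ⟨a, haS, b, ?_, ?_⟩
  · have hcc := Subgroup.mem_center_iff.mp c.2 (QuotientGroup.mk' (Subgroup.center G) a)
    -- hcc : mk a * c = c * mk a
    have h1 : QuotientGroup.mk' (Subgroup.center G) (a⁻¹ * b * a * b⁻¹) = 1 := by
      rw [map_mul, map_mul, map_mul, map_inv, map_inv, hb]
      have h2 : (c : G ⧸ Subgroup.center G) * QuotientGroup.mk' (Subgroup.center G) a *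
          (c : G ⧸ Subgroup.center G)⁻¹ = QuotientGroup.mk' (Subgroup.center G) a := by
        rw [← hcc, mul_inv_cancel_right]
      simp only [mul_assoc] at h2 ⊢
      rw [h2, inv_mul_cancel]
    exact (QuotientGroup.eq_one_iff _).mp h1
  · intro h
    apply hab
    have h' : a⁻¹ * b * a = b := by
      have := mul_inv_eq_one.mp h
      exact this
    conv_lhs => rw [← h']
    group

/-- Linear-algebra auxiliary lemma. -/
private lemma aux_linalg {p : ℕ} (hp : p.Prime) {k : Type*} [Field k]
    {V : Type*} [AddCommGroup V] [Module k V] [FiniteDimensional k V]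
    (hpk : (p : k) ≠ 0)
    (A Z : Module.End k V) (B : (Module.End k V)ˣ)
    (hAZ : Z * A = A * Z)
    (hA : A ^ p = 1) (hZ : Z ^ p = 1)
    (hB : (B : Module.End k V) * A = A * Z * B)
    (hBZ : (B : Module.End k V) * Z = Z * B)
    (hker : ∀ j, 0 < j → j < p → LinearMap.ker (Z ^ j - 1) = ⊥) :
    p * Module.finrank k (LinearMap.ker (A - 1)) = Module.finrank k V := by
  classical
  have hp0 : 0 < p := hp.pos
  have cAZ : Commute A Z := hAZ.symm
  have cZA : Commute Z A := hAZ
  have cBZ : Commute (B : Module.End k V) Z := hBZ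
  have hZmod : ∀ a : ℕ, Z ^ a = Z ^ (a % p) := by
    intro a
    conv_lhs => rw [← Nat.div_add_mod a p]
    rw [pow_add, pow_mul, hZ, one_pow, one_mul]
  set N : ℕ → Module.End k V := fun m => ∑ j ∈ range p, A ^ j * Z ^ (m * j) with hN
  set F : ℕ → Submodule k V := fun m => LinearMap.ker (A * Z ^ m - 1) with hF
  have hpow : ∀ m j : ℕ, (A * Z ^ m) ^ j = A ^ j * Z ^ (m * j) := by
    intro m j
    rw [(cAZ.pow_right m).mul_pow, ← pow_mul]
  have hAZm_pow : ∀ m : ℕ, (A * Z ^ m) ^ p = 1 := by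
    intro m
    rw [hpow, hA, one_mul, mul_comm m p, pow_mul, hZ, one_pow]
  have hNgeom : ∀ m, N m = ∑ j ∈ range p, (A * Z ^ m) ^ j := by
    intro m
    simp only [hN, hpow]
  have hNmem : ∀ m (v : V), N m v ∈ F m := by
    intro m v
    have h0 : (A * Z ^ m - 1) * N m = 0 := by
      rw [hNgeom, mul_geom_sum, hAZm_pow, sub_self]
    have h1 : (A * Z ^ m - 1) (N m v) = 0 := by
      rw [← Module.End.mul_apply, h0, LinearMap.zero_apply]
    exact LinearMap.mem_ker.mpr h1
  have hFapp : ∀ m (v : V), v ∈ F m → ∀ j, (A ^ j * Z ^ (m * j)) v = v := by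
    intro m v hv j
    have h1 : (A * Z ^ m) v = v := by
      have h := LinearMap.mem_ker.mp hv
      rw [LinearMap.sub_apply, Module.End.one_apply, sub_eq_zero] at h
      exact h
    have h2 : ∀ j : ℕ, ((A * Z ^ m) ^ j) v = v := by
      intro j
      induction j with
      | zero => simp
      | succ n ih => rw [pow_succ, Module.End.mul_apply, h1, ih]
    rw [← hpow]
    exact h2 j
  -- the key orthogonality computation
  have hkey : ∀ m m', m < p → m' < p → ∀ v ∈ F m,
      N m' v = if m' = m then (p : k) • v else 0 := by
    intro m m' hm hm' v hv
    set c := m' + (p - 1) * m with hc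
    have hcm : c + m = m' + p * m := by
      have h1 : (p - 1) * m = p * m - m := Nat.sub_one_mul p m
      have h2 : m ≤ p * m := Nat.le_mul_of_pos_left m hp0
      omega
    have hop : ∀ j : ℕ, Z ^ (c * j) * (A ^ j * Z ^ (m * j)) = A ^ j * Z ^ (m' * j) := by
      intro j
      have hcomm : Z ^ (c * j) * A ^ j = A ^ j * Z ^ (c * j) := (cZA.pow_pow _ _).eq
      have hexp : c * j + m * j = m' * j + p * (m * j) := by
        rw [← add_mul, hcm]
        ring
      calc Z ^ (c * j) * (A ^ j * Z ^ (m * j))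
          = A ^ j * (Z ^ (c * j) * Z ^ (m * j)) := by
            rw [← mul_assoc, hcomm, mul_assoc]
        _ = A ^ j * Z ^ (m' * j) := by
            rw [← pow_add, hexp, pow_add, pow_mul Z p (m * j), hZ, one_pow, mul_one]
    have happ : ∀ j : ℕ, (A ^ j * Z ^ (m' * j)) v = ((Z ^ c) ^ j) v := by
      intro j
      have h1 := hFapp m v hv j
      calc (A ^ j * Z ^ (m' * j)) v
          = (Z ^ (c * j) * (A ^ j * Z ^ (m * j))) v := by rw [hop]
        _ = (Z ^ (c * j)) ((A ^ j * Z ^ (m * j)) v) := Module.End.mul_apply _ _ _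
        _ = (Z ^ (c * j)) v := by rw [h1]
        _ = ((Z ^ c) ^ j) v := by rw [pow_mul]
    have hNv : N m' v = (∑ j ∈ range p, (Z ^ c) ^ j) v := by
      simp only [hN, LinearMap.coe_sum, Finset.sum_apply]
      exact Finset.sum_congr rfl fun j _ => happ j
    by_cases hmm' : m' = m
    · subst hmm'
      have hcz : Z ^ c = 1 := by
        have h1 : c = p * m' := by
          have h2 : (p - 1) * m' = p * m' - m' := Nat.sub_one_mul p m'
          have h3 : m' ≤ p * m' := Nat.le_mul_of_pos_left m' hp0
          omega
        rw [h1, pow_mul, hZ, one_pow]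
      rw [if_pos rfl, hNv, hcz]
      simp only [one_pow, Finset.sum_const, Finset.card_range]
      rw [← Nat.cast_smul_eq_nsmul k p (1 : Module.End k V), LinearMap.smul_apply,
        Module.End.one_apply]
    · rw [if_neg hmm']
      have hc'lt : c % p < p := Nat.mod_lt _ hp0
      have hc'pos : 0 < c % p := by
        rcases Nat.eq_zero_or_pos (c % p) with h0 | h
        · exfalso
          have h1 : (c + m) % p = m % p := by
            rw [Nat.add_mod, h0, zero_add, Nat.mod_mod_of_dvd m (dvd_refl p)]
          rw [hcm, Nat.add_mul_mod_self_left] at h1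
          exact hmm' (by rw [← Nat.mod_eq_of_lt hm', ← Nat.mod_eq_of_lt hm, h1])
        · exact h
      have hZc : Z ^ c = Z ^ (c % p) := hZmod c
      have hgeo : (Z ^ (c % p) - 1) * (∑ j ∈ range p, (Z ^ (c % p)) ^ j) = 0 := by
        rw [mul_geom_sum, ← pow_mul, mul_comm (c % p) p, pow_mul, hZ, one_pow, sub_self]
      rw [hNv, hZc]
      have h2 : (Z ^ (c % p) - 1) ((∑ j ∈ range p, (Z ^ (c % p)) ^ j) v) = 0 := by
        rw [← Module.End.mul_apply, hgeo, LinearMap.zero_apply]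
      have h3 := LinearMap.mem_ker.mpr h2
      rw [hker _ hc'pos hc'lt, Submodule.mem_bot] at h3
      exact h3
  -- the sum of the averaging operators is p • 1
  have hinner : ∀ j, 0 < j → j < p → (∑ m ∈ range p, (Z ^ j) ^ m) = 0 := by
    intro j hj hjp
    have hgeo : (Z ^ j - 1) * (∑ m ∈ range p, (Z ^ j) ^ m) = 0 := by
      rw [mul_geom_sum, ← pow_mul, mul_comm j p, pow_mul, hZ, one_pow, sub_self]
    ext v
    have h2 : (Z ^ j - 1) ((∑ m ∈ range p, (Z ^ j) ^ m) v) = 0 := by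
      rw [← Module.End.mul_apply, hgeo, LinearMap.zero_apply]
    have h3 := LinearMap.mem_ker.mpr h2
    rw [hker j hj hjp, Submodule.mem_bot] at h3
    simpa using h3
  have hsum : ∑ m ∈ range p, N m = (p : k) • (1 : Module.End k V) := by
    simp only [hN]
    rw [Finset.sum_comm]
    have hstep : ∀ j ∈ range p, (∑ m ∈ range p, A ^ j * Z ^ (m * j)) =
        if j = 0 then (p : k) • (1 : Module.End k V) else 0 := by
      intro j hj
      by_cases h0 : j = 0
      · subst h0
        rw [if_pos rfl]
        simp only [pow_zero, mul_zero, mul_one, Finset.sum_const, Finset.card_range]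
        rw [← Nat.cast_smul_eq_nsmul k p (1 : Module.End k V)]
      · rw [if_neg h0]
        have h1 : (∑ m ∈ range p, A ^ j * Z ^ (m * j)) =
            A ^ j * ∑ m ∈ range p, (Z ^ j) ^ m := by
          rw [Finset.mul_sum]
          refine Finset.sum_congr rfl fun m _ => ?_
          rw [← pow_mul, mul_comm j m]
        rw [h1, hinner j (Nat.pos_of_ne_zero h0) (Finset.mem_range.mp hj), mul_zero]
    rw [Finset.sum_congr rfl hstep, Finset.sum_ite_eq' (range p) 0
      (fun _ => (p : k) • (1 : Module.End k V)), if_pos (Finset.mem_range.mpr hp0)]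
  -- conjugation identities
  have hBpow : ∀ m : ℕ,
      ((B : Module.End k V)) ^ m * A = A * Z ^ m * ((B : Module.End k V)) ^ m := by
    intro m
    induction m with
    | zero => simp
    | succ n ih =>
      have hBZn : (B : Module.End k V) * Z ^ n = Z ^ n * B := (cBZ.pow_right n).eq
      calc (B : Module.End k V) ^ (n + 1) * A
          = (B : Module.End k V) * ((B : Module.End k V) ^ n * A) := by
            rw [pow_succ', mul_assoc]
        _ = (B : Module.End k V) * (A * Z ^ n * (B : Module.End k V) ^ n) := by rw [ih]
        _ = ((B : Module.End k V) * (A * Z ^ n)) * (B : Module.End k V) ^ n := by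
            rw [← mul_assoc]
        _ = (((B : Module.End k V) * A) * Z ^ n) * (B : Module.End k V) ^ n := by
            rw [← mul_assoc]
        _ = ((A * Z * (B : Module.End k V)) * Z ^ n) * (B : Module.End k V) ^ n := by
            rw [hB]
        _ = (A * Z * (Z ^ n * (B : Module.End k V))) * (B : Module.End k V) ^ n := by
            rw [mul_assoc (A * Z), hBZn]
        _ = A * Z ^ (n + 1) * (B : Module.End k V) ^ (n + 1) := by
            rw [pow_succ' Z n, pow_succ' (B : Module.End k V) n]
            simp only [mul_assoc]
  -- F m is the image of F 0 under the invertible map B^m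
  have hFmap : ∀ m : ℕ, F m = (F 0).map ((B ^ m : (Module.End k V)ˣ) : Module.End k V) := by
    intro m
    set u : Module.End k V := ((B ^ m : (Module.End k V)ˣ) : Module.End k V) with hu
    set u' : Module.End k V := (((B ^ m)⁻¹ : (Module.End k V)ˣ) : Module.End k V) with hu'
    have hBm : u = (B : Module.End k V) ^ m := Units.val_pow_eq_pow_val B m
    have hid' : u * (A - 1) = (A * Z ^ m - 1) * u := by
      rw [hBm, mul_sub, sub_mul, mul_one, one_mul, hBpow m]
    have hcancel : u * u' = 1 := by
      rw [hu, hu', ← Units.val_mul, mul_inv_cancel, Units.val_one]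
    have hcancel' : u' * u = 1 := by
      rw [hu, hu', ← Units.val_mul, inv_mul_cancel, Units.val_one]
    have hu_inj : Function.Injective u := by
      intro a b hab
      have h := congrArg u' hab
      rwa [← Module.End.mul_apply, ← Module.End.mul_apply, hcancel', Module.End.one_apply,
        Module.End.one_apply] at h
    ext w
    simp only [Submodule.mem_map, hF, pow_zero, mul_one, LinearMap.mem_ker]
    constructor
    · intro hw
      have e0 : u (u' w) = w := by
        rw [← Module.End.mul_apply, hcancel, Module.End.one_apply]
      refine ⟨u' w, ?_, e0⟩
      have e1 : u ((A - 1) (u' w)) = 0 := by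
        calc u ((A - 1) (u' w)) = (u * (A - 1)) (u' w) := (Module.End.mul_apply _ _ _).symm
          _ = ((A * Z ^ m - 1) * u) (u' w) := by rw [hid']
          _ = (A * Z ^ m - 1) (u (u' w)) := Module.End.mul_apply _ _ _
          _ = 0 := by rw [e0, hw]
      exact hu_inj (e1.trans (map_zero u).symm)
    · rintro ⟨v, hv, rfl⟩
      calc (A * Z ^ m - 1) (u v) = ((A * Z ^ m - 1) * u) v := (Module.End.mul_apply _ _ _).symm
        _ = (u * (A - 1)) v := by rw [← hid']
        _ = u ((A - 1) v) := Module.End.mul_apply _ _ _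
        _ = 0 := by rw [hv, map_zero]
  have hFrank : ∀ m : ℕ, Module.finrank k (F m) = Module.finrank k (F 0) := by
    intro m
    rw [hFmap m]
    have : (((B ^ m : (Module.End k V)ˣ) : Module.End k V)) =
        ((LinearMap.GeneralLinearGroup.toLinearEquiv (B ^ m) : V ≃ₗ[k] V) : V →ₗ[k] V) := rfl
    rw [this, LinearEquiv.finrank_map_eq]
  -- the assembly map
  let F' : Fin p → Submodule k V := fun m => F m.val
  let φ : (∀ m : Fin p, F' m) →ₗ[k] V :=
    { toFun := fun v => ∑ m : Fin p, (v m : V)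
      map_add' := by
        intro a b
        simp only [Pi.add_apply, Submodule.coe_add]
        rw [Finset.sum_add_distrib]
      map_smul' := by
        intro t a
        simp only [Pi.smul_apply, SetLike.val_smul, RingHom.id_apply]
        rw [Finset.smul_sum] }
  have hφ : ∀ v, φ v = ∑ m : Fin p, (v m : V) := fun _ => rfl
  have hinj : Function.Injective φ := by
    rw [injective_iff_map_eq_zero]
    intro v hv
    funext m₀
    have h1 : N m₀.val (∑ m : Fin p, (v m : V)) = 0 := by
      rw [← hφ, hv, map_zero]
    rw [map_sum] at h1
    have h2 : ∀ m : Fin p, N m₀.val (v m : V) =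
        if m₀.val = m.val then (p : k) • ((v m : V)) else 0 :=
      fun m => hkey m.val m₀.val m.isLt m₀.isLt _ (v m).2
    rw [Finset.sum_congr rfl fun m _ => h2 m] at h1
    have h3 : (∑ m : Fin p, if m₀.val = m.val then (p : k) • ((v m : V)) else 0) =
        (p : k) • ((v m₀ : V)) := by
      rw [Finset.sum_eq_single m₀]
      · rw [if_pos rfl]
      · intro b _ hb
        exact if_neg fun h => hb (Fin.ext h.symm)
      · intro h
        exact absurd (Finset.mem_univ m₀) h
    rw [h3] at h1
    rcases smul_eq_zero.mp h1 with h | h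
    · exact absurd h hpk
    · exact Subtype.ext h
  have hsurj : Function.Surjective φ := by
    intro w
    refine ⟨fun m => ⟨N m.val ((p : k)⁻¹ • w), hNmem m.val _⟩, ?_⟩
    rw [hφ]
    calc (∑ m : Fin p, N m.val ((p : k)⁻¹ • w))
        = ∑ m ∈ range p, N m ((p : k)⁻¹ • w) :=
          Fin.sum_univ_eq_sum_range (fun m => N m ((p : k)⁻¹ • w)) p
      _ = (∑ m ∈ range p, N m) ((p : k)⁻¹ • w) := by
          rw [LinearMap.coe_sum, Finset.sum_apply]
      _ = w := by
          rw [hsum, LinearMap.smul_apply, Module.End.one_apply, smul_smul,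
            mul_inv_cancel₀ hpk, one_smul]
  have e : (∀ m : Fin p, F' m) ≃ₗ[k] V := LinearEquiv.ofBijective φ ⟨hinj, hsurj⟩
  have h1 : Module.finrank k (∀ m : Fin p, F' m) = Module.finrank k V := e.finrank_eq
  rw [Module.finrank_pi_fintype] at h1
  have h2 : ∀ m : Fin p, Module.finrank k (F' m) = Module.finrank k (F 0) :=
    fun m => hFrank m.val
  rw [Finset.sum_congr rfl fun m _ => h2 m, Finset.sum_const, Finset.card_univ,
    Fintype.card_fin, smul_eq_mul] at h1
  have hF0 : F 0 = LinearMap.ker (A - 1) := by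
    simp only [hF, pow_zero, mul_one]
  rw [← hF0]
  exact h1

/-- **Fixed points of generators of order `p` in an irreducible representation.**
Let `P` be a finite `p`-group, `k` a field of characteristic different from `p`, and
`V` an irreducible `kP`-module on which `⁅P,P⁆` acts nontrivially. If `x₁, …, x_s`
generate `P` and each `x_j` has order `p`, then for some `i` we have
`dim C_V(x_i) = (1/p) · dim V`. -/
theorem statement_7 {p : ℕ} [Fact p.Prime]
    {k : Type*} [Field k] (hchar : ringChar k ≠ p)
    {P : Type*} [Group P] [Fintype P] (hP : IsPGroup p P)
    {V : Type*} [AddCommGroup V] [Module k V] [FiniteDimensional k V]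
    (ρ : Representation k P V)
    (hV : Nontrivial V)
    (hirr : ∀ U : Submodule k V, (∀ g : P, ∀ v ∈ U, ρ g v ∈ U) → U = ⊥ ∨ U = ⊤)
    (hcomm : ¬ ∀ z ∈ commutator P, ρ z = LinearMap.id)
    {s : ℕ} (x : Fin s → P)
    (hgen : Subgroup.closure (Set.range x) = ⊤)
    (hord : ∀ j : Fin s, orderOf (x j) = p) :
    ∃ i : Fin s,
      p * Module.finrank k (LinearMap.ker (ρ (x i) - LinearMap.id)) =
        Module.finrank k V := by
  classical
  have hp : p.Prime := Fact.out
  set K := (Representation.asGroupHom ρ).ker with hK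
  have hKmem : ∀ g : P, g ∈ K ↔ ρ g = LinearMap.id := by
    intro g
    rw [hK, MonoidHom.mem_ker]
    constructor
    · intro h
      have := congrArg Units.val h
      exact (by simpa [Representation.asGroupHom_apply] using this : ρ g = 1)
    · intro h
      apply Units.ext
      have h' : ρ g = 1 := h; simpa [Representation.asGroupHom_apply] using h'
  let π := QuotientGroup.mk' K
  have hπker : ∀ g : P, π g = 1 ↔ g ∈ K := fun g => QuotientGroup.eq_one_iff g
  have hQp : IsPGroup p (P ⧸ K) := hP.to_quotient K
  have hna : ¬ ∀ a b : P ⧸ K, a * b = b * a := by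
    intro hab
    apply hcomm
    intro z hz
    have hle : commutator P ≤ K := by
      rw [commutator_def, Subgroup.commutator_le]
      intro g _ h _
      refine (hπker _).mp ?_
      show π (g * h * g⁻¹ * h⁻¹) = 1
      rw [map_mul, map_mul, map_mul, map_inv, map_inv]
      rw [hab (π g) (π h)]
      group
    exact (hKmem z).mp (hle hz)
  have hgenQ : Subgroup.closure (Set.range fun i => π (x i)) = ⊤ := by
    have h1 : (Set.range fun i => π (x i)) = π '' Set.range x := by
      rw [← Set.range_comp]
      rfl
    rw [h1, ← MonoidHom.map_closure, hgen]
    have := QuotientGroup.mk'_surjective K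
    rw [← MonoidHom.range_eq_map]
    exact MonoidHom.range_eq_top.mpr this
  obtain ⟨abar, habarS, bbar, hbc, hbne⟩ := aux_grp hp hQp _ hgenQ hna
  obtain ⟨i, hi⟩ := habarS
  obtain ⟨y, hy⟩ := QuotientGroup.mk'_surjective K bbar
  refine ⟨i, ?_⟩
  set z : P := (x i)⁻¹ * y * x i * y⁻¹ with hz
  have hπz : π z = abar⁻¹ * bbar * abar * bbar⁻¹ := by
    rw [hz, map_mul, map_mul, map_mul, map_inv, map_inv, hy]
    have hi' : π (x i) = abar := hi
    show (π (x i))⁻¹ * bbar * π (x i) * bbar⁻¹ = abar⁻¹ * bbar * abar * bbar⁻¹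
    rw [hi']
  have hzne : ρ z ≠ LinearMap.id := by
    intro h
    have h2 : π z = 1 := (hπker z).mpr ((hKmem z).mpr h)
    exact hbne (hπz.symm.trans h2)
  have hcent : ∀ g : P, ρ z * ρ g = ρ g * ρ z := by
    intro g
    have h1' : π (z * g) = π (g * z) := by
      rw [map_mul π z g, map_mul π g z, hπz]
      exact (Subgroup.mem_center_iff.mp hbc (π g)).symm
    have h2 : (z * g)⁻¹ * (g * z) ∈ K := by
      rw [← hπker, map_mul, map_inv, h1', inv_mul_cancel]
    have h3 : ρ ((z * g)⁻¹ * (g * z)) = LinearMap.id := (hKmem _).mp h2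
    have h4 : ρ (g * z) = ρ (z * g) * ρ ((z * g)⁻¹ * (g * z)) := by
      rw [← map_mul]
      congr 1
      group
    rw [h3] at h4
    have h5 : ρ (g * z) = ρ (z * g) := by
      rw [h4]
      rfl
    rw [← map_mul, ← map_mul, h5]
  have hrel : y * x i = x i * z * y := by
    rw [hz]
    group
  -- the data for the linear algebra lemma
  have hA : (ρ (x i)) ^ p = 1 := by
    rw [← map_pow, ← hord i, pow_orderOf_eq_one, map_one]
  have hAZ : ρ z * ρ (x i) = ρ (x i) * ρ z := hcent (x i)
  have hxz_pow : (x i * z) ^ p = 1 := by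
    have h1 : x i * z = y * x i * y⁻¹ := by
      rw [hz]
      group
    rw [h1, conj_pow, ← hord i, pow_orderOf_eq_one, mul_one, mul_inv_cancel]
  have hZ : (ρ z) ^ p = 1 := by
    have h2 : (ρ (x i) * ρ z) ^ p = 1 := by
      rw [← map_mul, ← map_pow, hxz_pow, map_one]
    have h3 : (ρ (x i) * ρ z) ^ p = (ρ (x i)) ^ p * (ρ z) ^ p :=
      (Commute.mul_pow (hAZ.symm : Commute (ρ (x i)) (ρ z)) p)
    rw [h3, hA, one_mul] at h2
    exact h2
  have hB : ((Representation.asGroupHom ρ y : (V →ₗ[k] V)ˣ) : Module.End k V) * ρ (x i) =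
      ρ (x i) * ρ z * (Representation.asGroupHom ρ y : (V →ₗ[k] V)ˣ) := by
    rw [Representation.asGroupHom_apply, ← map_mul, hrel, map_mul, map_mul]
  have hBZ : ((Representation.asGroupHom ρ y : (V →ₗ[k] V)ˣ) : Module.End k V) * ρ z =
      ρ z * (Representation.asGroupHom ρ y : (V →ₗ[k] V)ˣ) := by
    rw [Representation.asGroupHom_apply]
    exact (hcent y).symm
  have hker : ∀ j, 0 < j → j < p → LinearMap.ker ((ρ z) ^ j - 1) = ⊥ := by
    intro j hj hjp
    have hcj : ∀ g : P, (ρ z) ^ j * ρ g = ρ g * (ρ z) ^ j := by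
      intro g
      exact ((Commute.pow_left (hcent g : Commute (ρ z) (ρ g)) j).eq)
    have hinv : ∀ g : P, ∀ v ∈ LinearMap.ker ((ρ z) ^ j - 1), ρ g v ∈
        LinearMap.ker ((ρ z) ^ j - 1) := by
      intro g v hv
      rw [LinearMap.mem_ker] at hv ⊢
      calc ((ρ z) ^ j - 1) (ρ g v) = (((ρ z) ^ j - 1) * ρ g) v := by
            rw [Module.End.mul_apply]
        _ = (ρ g * ((ρ z) ^ j - 1)) v := by
            rw [sub_mul, mul_sub, one_mul, mul_one, hcj g]
        _ = ρ g (((ρ z) ^ j - 1) v) := Module.End.mul_apply _ _ _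
        _ = 0 := by rw [hv, map_zero]
    rcases hirr _ hinv with h | h
    · exact h
    · exfalso
      have hzc1 : (ρ z) ^ j = 1 := by
        ext v
        have hvmem : v ∈ LinearMap.ker ((ρ z) ^ j - 1) := h ▸ Submodule.mem_top
        rw [LinearMap.mem_ker, LinearMap.sub_apply, Module.End.one_apply, sub_eq_zero] at hvmem
        simpa using hvmem
      have hd1 : orderOf (ρ z) ∣ j := orderOf_dvd_of_pow_eq_one hzc1
      have hd2 : orderOf (ρ z) ∣ p := orderOf_dvd_of_pow_eq_one hZ
      have hnd : ¬ p ∣ j := fun hdvd => absurd (Nat.le_of_dvd hj hdvd) (not_le.mpr hjp)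
      have hcop : Nat.gcd p j = 1 := (Nat.Prime.coprime_iff_not_dvd hp).mpr hnd
      have hdg : orderOf (ρ z) ∣ 1 := hcop ▸ Nat.dvd_gcd hd2 hd1
      have h1 : orderOf (ρ z) = 1 := Nat.dvd_one.mp hdg
      have h2 : ρ z = 1 := orderOf_eq_one_iff.mp h1
      exact hzne (by rw [h2]; rfl)
  have hpk : (p : k) ≠ 0 := by
    intro h
    haveI : CharP k (ringChar k) := ringChar.charP k
    have hdvd : ringChar k ∣ p := (CharP.cast_eq_zero_iff k (ringChar k) p).mp h
    rcases hp.eq_one_or_self_of_dvd _ hdvd with h1 | h1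
    · exact CharP.char_ne_one k (ringChar k) h1
    · exact hchar h1
  have hmain := aux_linalg hp hpk (ρ (x i)) (ρ z) (Representation.asGroupHom ρ y)
    hAZ hA hZ hB hBZ hker
  have hgoal : ρ (x i) - LinearMap.id = ρ (x i) - (1 : Module.End k V) := rfl
  rw [hgoal]
  exact hmain
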